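/- Abstract form of the first assertion of Lemma 4.1 (vanishing of the third variation of the penalized Willmore functional): Let E be a real normed vector space, W, P1, P2 : E → ℝ three times continuously Fréchet differentiable, ã₀ > 0, b ∈ ℝ. Let f : [0,ã₀) → E be twice continuously differentiable (one-sided at 0) and α, β : [0,ã₀) → ℝ continuously differentiable with α'(0) = β'(0) = 0. Assume for every ã ∈ [0,ã₀): P1(f(ã)) = ã², P2(f(ã)) = b, and DW(f(ã)) = α(ã)·DP1(f(ã)) + β(ã)·DP2(f(ã)). Assume moreover the kernel condition: with φ := f'(0), D²W(f(0))(φ,v) − α(0)·D²P1(f(0))(φ,v) − β(0)·D²P2(f(0))(φ,v) = 0 for all v ∈ E. Then D³W(f(0))(φ,φ,φ) − α(0)·D³P1(f(0))(φ,φ,φ) − β(0)·D³P2(f(0))(φ,φ,φ) = 0. -/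

import Mathlib

open Set

private lemma aux_mul_zero {S : Set ℝ} {g u : ℝ → ℝ} {u' : ℝ}
    (hg : ContinuousWithinAt g S 0) (hg0 : g 0 = 0)
    (hu : HasDerivWithinAt u u' S 0) (hu0 : u 0 = 0) :
    HasDerivWithinAt (fun a => g a * u a) 0 S 0 := by
  rw [hasDerivWithinAt_iff_isLittleO]
  have h1 : (fun a : ℝ => g a) =o[nhdsWithin 0 S] (fun _ => (1:ℝ)) :=
    Asymptotics.isLittleO_one_iff ℝ |>.mpr (by simpa [hg0] using hg.tendsto)
  have h2 : (fun a : ℝ => u a) =O[nhdsWithin 0 S] (fun a => a) := by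
    simpa [hu0, Function.comp_def] using hu.isBigO_sub
  simpa [hg0, hu0] using h1.mul_isBigO h2

private lemma aux_fderiv_comp {E : Type*} [NormedAddCommGroup E] [NormedSpace ℝ E]
    {F : E → ℝ} (hF : ContDiff ℝ 3 F)
    {S : Set ℝ} {f : ℝ → E} {f'x : E} {x : ℝ} (hf : HasDerivWithinAt f f'x S x) (v : E) :
    HasDerivWithinAt (fun a => fderiv ℝ F (f a) v)
      (fderiv ℝ (fderiv ℝ F) (f x) f'x v) S x := by
  have h1 : ContDiff ℝ 2 (fderiv ℝ F) := hF.fderiv_right (by norm_num)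
  have h2 : HasFDerivAt (fderiv ℝ F) (fderiv ℝ (fderiv ℝ F) (f x)) (f x) :=
    ((h1.differentiable (by norm_num)) (f x)).hasFDerivAt
  have h3 := h2.comp_hasDerivWithinAt x hf
  simpa using h3.clm_apply (hasDerivWithinAt_const x S v)

private lemma aux_fderiv2_comp {E : Type*} [NormedAddCommGroup E] [NormedSpace ℝ E]
    {F : E → ℝ} (hF : ContDiff ℝ 3 F)
    {S : Set ℝ} {f g : ℝ → E} {f'x g'x : E} {x : ℝ}
    (hf : HasDerivWithinAt f f'x S x) (hg : HasDerivWithinAt g g'x S x) (v : E) :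
    HasDerivWithinAt (fun a => fderiv ℝ (fderiv ℝ F) (f a) (g a) v)
      (fderiv ℝ (fderiv ℝ (fderiv ℝ F)) (f x) f'x (g x) v
        + fderiv ℝ (fderiv ℝ F) (f x) g'x v) S x := by
  have h1 : ContDiff ℝ 1 (fderiv ℝ (fderiv ℝ F)) :=
    (hF.fderiv_right (m := 2) (by norm_num)).fderiv_right (m := 1) (by norm_num)
  have h2 : HasFDerivAt (fderiv ℝ (fderiv ℝ F))
      (fderiv ℝ (fderiv ℝ (fderiv ℝ F)) (f x)) (f x) :=
    ((h1.differentiable (by norm_num)) (f x)).hasFDerivAt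
  have h4 : HasDerivWithinAt (fun a => fderiv ℝ (fderiv ℝ F) (f a)) (fderiv ℝ (fderiv ℝ (fderiv ℝ F)) (f x) f'x) S x :=
    HasFDerivAt.comp_hasDerivWithinAt (l := fderiv ℝ (fderiv ℝ F)) x h2 hf
  have h3 : HasDerivWithinAt (fun a => fderiv ℝ (fderiv ℝ F) (f a) (g a))
      (fderiv ℝ (fderiv ℝ (fderiv ℝ F)) (f x) f'x (g x) + fderiv ℝ (fderiv ℝ F) (f x) g'x) S x :=
    h4.clm_apply hg
  simpa using h3.clm_apply (hasDerivWithinAt_const x S v)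

theorem third_variation_penalized_functional_vanishes
    {E : Type*} [NormedAddCommGroup E] [NormedSpace ℝ E]
    (W P1 P2 : E → ℝ)
    (hW : ContDiff ℝ 3 W) (hP1 : ContDiff ℝ 3 P1) (hP2 : ContDiff ℝ 3 P2)
    (a₀ : ℝ) (ha₀ : 0 < a₀) (b : ℝ)
    (f f' f'' : ℝ → E) (α β α' β' : ℝ → ℝ)
    (hf : ∀ a ∈ Ico (0:ℝ) a₀, HasDerivWithinAt f (f' a) (Ico (0:ℝ) a₀) a)
    (hf' : ∀ a ∈ Ico (0:ℝ) a₀, HasDerivWithinAt f' (f'' a) (Ico (0:ℝ) a₀) a)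
    (hf''cont : ContinuousOn f'' (Ico (0:ℝ) a₀))
    (hα : ∀ a ∈ Ico (0:ℝ) a₀, HasDerivWithinAt α (α' a) (Ico (0:ℝ) a₀) a)
    (hβ : ∀ a ∈ Ico (0:ℝ) a₀, HasDerivWithinAt β (β' a) (Ico (0:ℝ) a₀) a)
    (hα'cont : ContinuousOn α' (Ico (0:ℝ) a₀))
    (hβ'cont : ContinuousOn β' (Ico (0:ℝ) a₀))
    (hα'0 : α' 0 = 0) (hβ'0 : β' 0 = 0)
    (hP1f : ∀ a ∈ Ico (0:ℝ) a₀, P1 (f a) = a ^ 2)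
    (hP2f : ∀ a ∈ Ico (0:ℝ) a₀, P2 (f a) = b)
    (hEL : ∀ a ∈ Ico (0:ℝ) a₀, fderiv ℝ W (f a)
        = α a • fderiv ℝ P1 (f a) + β a • fderiv ℝ P2 (f a))
    (hker : ∀ v : E,
      fderiv ℝ (fderiv ℝ W) (f 0) (f' 0) v
        - α 0 * (fderiv ℝ (fderiv ℝ P1) (f 0) (f' 0) v)
        - β 0 * (fderiv ℝ (fderiv ℝ P2) (f 0) (f' 0) v) = 0) :
    fderiv ℝ (fderiv ℝ (fderiv ℝ W)) (f 0) (f' 0) (f' 0) (f' 0)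
      - α 0 * (fderiv ℝ (fderiv ℝ (fderiv ℝ P1)) (f 0) (f' 0) (f' 0) (f' 0))
      - β 0 * (fderiv ℝ (fderiv ℝ (fderiv ℝ P2)) (f 0) (f' 0) (f' 0) (f' 0))
    = 0 := by
  set S : Set ℝ := Ico (0:ℝ) a₀ with hS
  have h0S : (0:ℝ) ∈ S := ⟨le_refl 0, ha₀⟩
  have hUD : UniqueDiffOn ℝ S := uniqueDiffOn_Ico 0 a₀
  -- first derivatives of the constraints vanish at 0 in the direction φ = f' 0
  have hP1φ : fderiv ℝ P1 (f 0) (f' 0) = 0 := by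
    have hc : HasDerivWithinAt (fun a => P1 (f a)) (fderiv ℝ P1 (f 0) (f' 0)) S 0 :=
      ((hP1.differentiable (by norm_num)) (f 0)).hasFDerivAt.comp_hasDerivWithinAt 0 (hf 0 h0S)
    have hc2 : HasDerivWithinAt (fun a : ℝ => a ^ 2) (0:ℝ) S 0 := by
      simpa using (hasDerivAt_pow 2 (0:ℝ)).hasDerivWithinAt
    have hc3 : HasDerivWithinAt (fun a => P1 (f a)) 0 S 0 :=
      hc2.congr (fun y hy => hP1f y hy) (hP1f 0 h0S)
    have e1 := hc.derivWithin (hUD 0 h0S)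
    have e2 := hc3.derivWithin (hUD 0 h0S)
    rw [e1] at e2; exact e2.symm ▸ rfl
  have hP2φ : fderiv ℝ P2 (f 0) (f' 0) = 0 := by
    have hc : HasDerivWithinAt (fun a => P2 (f a)) (fderiv ℝ P2 (f 0) (f' 0)) S 0 :=
      ((hP2.differentiable (by norm_num)) (f 0)).hasFDerivAt.comp_hasDerivWithinAt 0 (hf 0 h0S)
    have hc3 : HasDerivWithinAt (fun a => P2 (f a)) 0 S 0 :=
      (hasDerivWithinAt_const 0 S b).congr (fun y hy => hP2f y hy) (hP2f 0 h0S)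
    have e1 := hc.derivWithin (hUD 0 h0S)
    have e2 := hc3.derivWithin (hUD 0 h0S)
    rw [e1] at e2; exact e2.symm ▸ rfl
  -- differentiated Euler-Lagrange identity, in the fixed direction φ = f' 0
  have keyA : ∀ a ∈ S,
      fderiv ℝ (fderiv ℝ W) (f a) (f' a) (f' 0)
        - (α' a * fderiv ℝ P1 (f a) (f' 0)
            + α a * fderiv ℝ (fderiv ℝ P1) (f a) (f' a) (f' 0))
        - (β' a * fderiv ℝ P2 (f a) (f' 0)
            + β a * fderiv ℝ (fderiv ℝ P2) (f a) (f' a) (f' 0)) = 0 := by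
    intro a ha
    have hW1 := aux_fderiv_comp hW (hf a ha) (f' 0)
    have hP11 := aux_fderiv_comp hP1 (hf a ha) (f' 0)
    have hP21 := aux_fderiv_comp hP2 (hf a ha) (f' 0)
    have hL := (hW1.sub ((hα a ha).mul hP11)).sub ((hβ a ha).mul hP21)
    have hzero : HasDerivWithinAt (fun s => fderiv ℝ W (f s) (f' 0)
        - α s * fderiv ℝ P1 (f s) (f' 0) - β s * fderiv ℝ P2 (f s) (f' 0)) 0 S a := by
      refine (hasDerivWithinAt_const a S (0:ℝ)).congr (fun y hy => ?_) ?_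
      · rw [hEL y hy]; simp [smul_eq_mul]
      · rw [hEL a ha]; simp [smul_eq_mul]
    have e1 := hL.derivWithin (hUD a ha)
    have e2 := hzero.derivWithin (hUD a ha)
    replace e2 := e1.symm.trans e2
    linarith [e2]
  -- differentiate keyA once more at 0
  have t1 := aux_fderiv2_comp hW (hf 0 h0S) (hf' 0 h0S) (f' 0)
  have tP1 := aux_fderiv2_comp hP1 (hf 0 h0S) (hf' 0 h0S) (f' 0)
  have tP2 := aux_fderiv2_comp hP2 (hf 0 h0S) (hf' 0 h0S) (f' 0)
  have t2 := (hα 0 h0S).mul tP1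
  have t3 := (hβ 0 h0S).mul tP2
  have t4 : HasDerivWithinAt (fun a => α' a * fderiv ℝ P1 (f a) (f' 0)) 0 S 0 :=
    aux_mul_zero (hα'cont 0 h0S) hα'0 (aux_fderiv_comp hP1 (hf 0 h0S) (f' 0)) hP1φ
  have t5 : HasDerivWithinAt (fun a => β' a * fderiv ℝ P2 (f a) (f' 0)) 0 S 0 :=
    aux_mul_zero (hβ'cont 0 h0S) hβ'0 (aux_fderiv_comp hP2 (hf 0 h0S) (f' 0)) hP2φ
  have hN := (((t1.sub t4).sub t2).sub t5).sub t3
  have hNzero : HasDerivWithinAt (fun a =>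
      fderiv ℝ (fderiv ℝ W) (f a) (f' a) (f' 0)
        - α' a * fderiv ℝ P1 (f a) (f' 0)
        - α a * fderiv ℝ (fderiv ℝ P1) (f a) (f' a) (f' 0)
        - β' a * fderiv ℝ P2 (f a) (f' 0)
        - β a * fderiv ℝ (fderiv ℝ P2) (f a) (f' a) (f' 0)) 0 S 0 := by
    refine (hasDerivWithinAt_const 0 S (0:ℝ)).congr (fun y hy => ?_) ?_
    · linarith [keyA y hy]
    · linarith [keyA 0 h0S]
  have e1 := hN.derivWithin (hUD 0 h0S)
  have e2 := hNzero.derivWithin (hUD 0 h0S)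
  replace e2 := e1.symm.trans e2
  -- symmetry of the second derivatives
  have symW : fderiv ℝ (fderiv ℝ W) (f 0) (f'' 0) (f' 0)
      = fderiv ℝ (fderiv ℝ W) (f 0) (f' 0) (f'' 0) :=
    (hW.contDiffAt.isSymmSndFDerivAt (by norm_num)) (f'' 0) (f' 0)
  have symP1 : fderiv ℝ (fderiv ℝ P1) (f 0) (f'' 0) (f' 0)
      = fderiv ℝ (fderiv ℝ P1) (f 0) (f' 0) (f'' 0) :=
    (hP1.contDiffAt.isSymmSndFDerivAt (by norm_num)) (f'' 0) (f' 0)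
  have symP2 : fderiv ℝ (fderiv ℝ P2) (f 0) (f'' 0) (f' 0)
      = fderiv ℝ (fderiv ℝ P2) (f 0) (f' 0) (f'' 0) :=
    (hP2.contDiffAt.isSymmSndFDerivAt (by norm_num)) (f'' 0) (f' 0)
  have hk := hker (f'' 0)
  linear_combination e2 - hk - symW + α 0 * symP1 + β 0 * symP2
    + (((fderiv ℝ (fderiv ℝ P1) (f 0)) (f' 0)) (f' 0)) * hα'0
    + (((fderiv ℝ (fderiv ℝ P2) (f 0)) (f' 0)) (f' 0)) * hβ'0
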